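/- Let n be a positive natural number, let P be an n×n complex Hermitian positive definite matrix and Q an n×n complex Hermitian positive semidefinite matrix, and set X = P + Q. Let μ = λ_max(X^{-1/2} Q X^{-1/2}). Then λ_max(P^{-1/2} Q P^{-1/2}) = μ / (1 − μ), where for a Hermitian positive definite matrix M, M^{-1/2} is the inverse of its Hermitian positive-definite square root and λ_max denotes the largest eigenvalue of a Hermitian matrix. -/

import Mathlib

open Matrix
open scoped ComplexOrder

noncomputable def frobNorm {m n : Type*} [Fintype m] [Fintype n] (A : Matrix m n ℂ) : ℝ :=
  Real.sqrt (∑ i, ∑ j, ‖A i j‖ ^ 2)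

noncomputable def lambdaMax {k : Type*} [Fintype k] [DecidableEq k] {A : Matrix k k ℂ}
    (hA : A.IsHermitian) : ℝ := ⨆ i, hA.eigenvalues i

noncomputable def lambdaMin {k : Type*} [Fintype k] [DecidableEq k] {A : Matrix k k ℂ}
    (hA : A.IsHermitian) : ℝ := ⨅ i, hA.eigenvalues i

noncomputable def invSqrt {k : Type*} [Fintype k] [DecidableEq k] {P : Matrix k k ℂ}
    (hP : P.PosDef) : Matrix k k ℂ :=
  ((hP.posSemidef.1.eigenvectorUnitary : Matrix k k ℂ) *
    diagonal ((↑) ∘ (√·) ∘ hP.posSemidef.1.eigenvalues) *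
    (star hP.posSemidef.1.eigenvectorUnitary : Matrix k k ℂ))⁻¹

theorem invSqrt_isHermitian {k : Type*} [Fintype k] [DecidableEq k] {P : Matrix k k ℂ}
    (hP : P.PosDef) : (invSqrt hP).IsHermitian :=
  by
    unfold invSqrt
    refine IsHermitian.inv ?_
    rw [IsHermitian, conjTranspose_mul, conjTranspose_mul, diagonal_conjTranspose,
      Matrix.mul_assoc]
    simp only [star_eq_conjTranspose, conjTranspose_conjTranspose]
    congr 3
    ext i
    simp [Function.comp]

theorem conj_isHermitian {k : Type*} [Fintype k] [DecidableEq k] {P Q : Matrix k k ℂ}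
    (hP : P.PosDef) (hQ : Q.IsHermitian) : (invSqrt hP * Q * invSqrt hP).IsHermitian := by
  have h := isHermitian_mul_mul_conjTranspose (invSqrt hP) hQ
  rwa [(invSqrt_isHermitian hP).eq] at h

theorem smul_posDef {k : Type*} [Fintype k] [DecidableEq k] {Z : Matrix k k ℂ}
    (hZ : Z.PosDef) {r : ℝ} (hr : 0 < r) : (((r : ℂ)) • Z).PosDef := by
  rw [posDef_iff_dotProduct_mulVec]
  constructor
  · show (((r : ℂ)) • Z)ᴴ = _
    rw [conjTranspose_smul, hZ.1.eq]
    congr 1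
    simp [RCLike.star_def]
  · intro x hx
    rw [smul_mulVec, dotProduct_smul]
    have h2 := hZ.dotProduct_mulVec_pos hx
    have hc : (0 : ℂ) < (r : ℂ) := by exact_mod_cast hr
    exact smul_pos hc h2

section Aux
variable {k : Type*} [Fintype k] [DecidableEq k]
set_option linter.unusedSectionVars false

noncomputable def sqrtM {M : Matrix k k ℂ} (hM : M.PosDef) : Matrix k k ℂ :=
  (hM.posSemidef.1.eigenvectorUnitary : Matrix k k ℂ) *
    diagonal ((↑) ∘ (√·) ∘ hM.posSemidef.1.eigenvalues) *
    (star hM.posSemidef.1.eigenvectorUnitary : Matrix k k ℂ)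

lemma sqrtM_isHermitian {M : Matrix k k ℂ} (hM : M.PosDef) : (sqrtM hM).IsHermitian := by
  unfold sqrtM
  rw [IsHermitian, conjTranspose_mul, conjTranspose_mul, diagonal_conjTranspose,
    Matrix.mul_assoc]
  simp only [star_eq_conjTranspose, conjTranspose_conjTranspose]
  congr 3
  ext i
  simp [Function.comp]

lemma sqrtM_mul_self {M : Matrix k k ℂ} (hM : M.PosDef) : (sqrtM hM) * (sqrtM hM) = M := by
  have hU : (star hM.posSemidef.1.eigenvectorUnitary : Matrix k k ℂ) *
      (hM.posSemidef.1.eigenvectorUnitary : Matrix k k ℂ) = 1 :=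
    Unitary.coe_star_mul_self _
  have hD : diagonal (((↑) : ℝ → ℂ) ∘ (√·) ∘ hM.posSemidef.1.eigenvalues) *
      diagonal (((↑) : ℝ → ℂ) ∘ (√·) ∘ hM.posSemidef.1.eigenvalues) =
      diagonal (RCLike.ofReal ∘ hM.posSemidef.1.eigenvalues) := by
    rw [diagonal_mul_diagonal]
    congr 1
    ext i
    simp only [Function.comp]
    rw [← Complex.ofReal_mul, Real.mul_self_sqrt (hM.posSemidef.eigenvalues_nonneg i)]
    rfl
  conv_rhs => rw [hM.posSemidef.1.spectral_theorem, Unitary.conjStarAlgAut_apply]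
  unfold sqrtM
  rw [← hD]
  simp only [mul_assoc]
  rw [← mul_assoc (star (hM.posSemidef.1.eigenvectorUnitary : Matrix k k ℂ)), hU, one_mul]

lemma aux_sqrt_isUnit_det {M : Matrix k k ℂ} (hM : M.PosDef) :
    IsUnit (sqrtM hM).det := by
  have h : (sqrtM hM).det * (sqrtM hM).det = M.det := by
    rw [← det_mul, sqrtM_mul_self hM]
  have hu : IsUnit M.det := hM.det_pos.ne'.isUnit
  rw [← h] at hu
  exact isUnit_of_mul_isUnit_left hu

lemma aux_sqrt_mul_invSqrt {M : Matrix k k ℂ} (hM : M.PosDef) :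
    (sqrtM hM) * invSqrt hM = 1 :=
  mul_nonsing_inv _ (aux_sqrt_isUnit_det hM)

lemma aux_invSqrt_mul_sqrt {M : Matrix k k ℂ} (hM : M.PosDef) :
    invSqrt hM * (sqrtM hM) = 1 :=
  nonsing_inv_mul _ (aux_sqrt_isUnit_det hM)

lemma aux_invSqrt_mul_self_mul {M : Matrix k k ℂ} (hM : M.PosDef) :
    invSqrt hM * M * invSqrt hM = 1 := by
  have h : invSqrt hM * M * invSqrt hM =
      invSqrt hM * (sqrtM hM * (sqrtM hM)) * invSqrt hM := by
    rw [sqrtM_mul_self hM]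
  rw [h, ← mul_assoc, mul_assoc _ _ (invSqrt hM), aux_sqrt_mul_invSqrt,
    mul_one, aux_invSqrt_mul_sqrt]

lemma aux_sqrt_conj_invSqrt {M N : Matrix k k ℂ} (hM : M.PosDef) :
    (sqrtM hM) * (invSqrt hM * N * invSqrt hM) * (sqrtM hM) = N := by
  simp only [← mul_assoc]
  rw [aux_sqrt_mul_invSqrt, one_mul, mul_assoc, aux_invSqrt_mul_sqrt, mul_one]

lemma smul_posSemidef' {Z : Matrix k k ℂ} (hZ : Z.PosSemidef) {r : ℝ} (hr : 0 ≤ r) :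
    (((r : ℂ)) • Z).PosSemidef := by
  rw [posSemidef_iff_dotProduct_mulVec]
  constructor
  · show (((r : ℂ)) • Z)ᴴ = _
    rw [conjTranspose_smul, hZ.1.eq]
    congr 1
    simp [RCLike.star_def]
  · intro x
    rw [smul_mulVec, dotProduct_smul]
    exact smul_nonneg (by exact_mod_cast hr) (hZ.dotProduct_mulVec_nonneg x)

lemma re_quad {A : Matrix k k ℂ} (hA : A.IsHermitian) (c : ℝ) (i : k) :
    RCLike.re (star ⇑(hA.eigenvectorBasis i) ⬝ᵥ
      ((((c : ℂ)) • (1 : Matrix k k ℂ) - A) *ᵥ ⇑(hA.eigenvectorBasis i))) =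
      c - hA.eigenvalues i := by
  have hv1 : star ⇑(hA.eigenvectorBasis i) ⬝ᵥ ⇑(hA.eigenvectorBasis i) = 1 := by
    have h := (EuclideanSpace.inner_eq_star_dotProduct (𝕜 := ℂ)
      (hA.eigenvectorBasis i) (hA.eigenvectorBasis i)).symm
    rw [inner_self_eq_norm_sq_to_K, hA.eigenvectorBasis.orthonormal.1 i] at h
    rw [dotProduct_comm]
    simpa using h
  rw [sub_mulVec, smul_mulVec, one_mulVec, dotProduct_sub, dotProduct_smul,
    hA.mulVec_eigenvectorBasis, RCLike.real_smul_eq_coe_smul (K := ℂ), dotProduct_smul,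
    hv1]
  simp [Complex.ofReal_re]

lemma eig_le_iff {A : Matrix k k ℂ} (hA : A.IsHermitian) (c : ℝ) :
    (((c : ℂ)) • (1 : Matrix k k ℂ) - A).PosSemidef ↔ ∀ i, hA.eigenvalues i ≤ c := by
  constructor
  · intro h i
    have h2 := h.re_dotProduct_nonneg ⇑(hA.eigenvectorBasis i)
    rw [re_quad hA c i] at h2
    linarith
  · intro h
    have hspec := hA.spectral_theorem
    rw [Unitary.conjStarAlgAut_apply] at hspec
    have hU : (hA.eigenvectorUnitary : Matrix k k ℂ) * (star hA.eigenvectorUnitary : Matrix k k ℂ) = 1 :=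
      (Matrix.mem_unitaryGroup_iff).mp hA.eigenvectorUnitary.2
    have key : ((c : ℂ)) • (1 : Matrix k k ℂ) - A =
        (hA.eigenvectorUnitary : Matrix k k ℂ) *
          (diagonal fun i => (c : ℂ) - (hA.eigenvalues i : ℂ)) *
          (star hA.eigenvectorUnitary : Matrix k k ℂ) := by
      have hd : (diagonal fun i => (c : ℂ) - (hA.eigenvalues i : ℂ)) =
          ((c : ℂ)) • (1 : Matrix k k ℂ) - diagonal (RCLike.ofReal ∘ hA.eigenvalues) := by
        rw [← diagonal_one, ← diagonal_smul, diagonal_sub]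
        congr 1 with i
        simp [Pi.smul_apply]
      rw [hd, Matrix.mul_sub, Matrix.sub_mul, Matrix.mul_smul, Matrix.smul_mul, mul_one, hU,
        ← hspec]
    rw [key]
    have hdpsd : (diagonal fun i => (c : ℂ) - (hA.eigenvalues i : ℂ)).PosSemidef := by
      refine posSemidef_diagonal_iff.mpr fun i => ?_
      have : (0 : ℝ) ≤ c - hA.eigenvalues i := by linarith [h i]
      exact_mod_cast Complex.zero_le_real.mpr this
    have := hdpsd.mul_mul_conjTranspose_same (hA.eigenvectorUnitary : Matrix k k ℂ)
    rwa [← star_eq_conjTranspose] at this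

lemma conj_posDef' {P : Matrix k k ℂ} (hP : P.PosDef) {T : Matrix k k ℂ} (hT : T.IsHermitian)
    (hTu : IsUnit T) : (T * P * T).PosDef := by
  rw [posDef_iff_dotProduct_mulVec]
  constructor
  · have h := isHermitian_mul_mul_conjTranspose T hP.1
    rwa [hT.eq] at h
  · intro x hx
    have hTx : T *ᵥ x ≠ 0 := by
      intro h0
      exact hx (Matrix.mulVec_injective_iff_isUnit.mpr hTu (by simpa using h0))
    have h2 := hP.dotProduct_mulVec_pos hTx
    have heq : star x ⬝ᵥ (T * P * T) *ᵥ x = star (T *ᵥ x) ⬝ᵥ P *ᵥ (T *ᵥ x) := by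
      rw [star_mulVec, hT.eq, mulVec_mulVec, ← dotProduct_mulVec, mulVec_mulVec]
      rw [← mul_assoc]
    rwa [heq]

lemma psd_congr {M N : Matrix k k ℂ} (hM : M.PosDef) (hN : N.IsHermitian) (c : ℝ) :
    (((c : ℂ)) • M - N).PosSemidef ↔
      (((c : ℂ)) • (1 : Matrix k k ℂ) - invSqrt hM * N * invSqrt hM).PosSemidef := by
  have hT : (invSqrt hM)ᴴ = invSqrt hM := (invSqrt_isHermitian hM).eq
  have hS : (sqrtM hM)ᴴ = (sqrtM hM) := (sqrtM_isHermitian hM).eq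
  constructor
  · intro h
    have h2 := h.mul_mul_conjTranspose_same (invSqrt hM)
    rwa [hT, Matrix.mul_sub, Matrix.sub_mul, Matrix.mul_smul, Matrix.smul_mul,
      aux_invSqrt_mul_self_mul] at h2
  · intro h
    have h2 := h.mul_mul_conjTranspose_same (sqrtM hM)
    rwa [hS, Matrix.mul_sub, Matrix.sub_mul, Matrix.mul_smul, Matrix.smul_mul, mul_one,
      sqrtM_mul_self hM, aux_sqrt_conj_invSqrt] at h2

lemma lambdaMax_le_iff [Nonempty k] {M N : Matrix k k ℂ} (hM : M.PosDef) (hN : N.IsHermitian)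
    (c : ℝ) :
    lambdaMax (conj_isHermitian hM hN) ≤ c ↔ (((c : ℂ)) • M - N).PosSemidef := by
  rw [psd_congr hM hN c, eig_le_iff (conj_isHermitian hM hN) c, lambdaMax,
    ciSup_le_iff (Set.Finite.bddAbove (Set.finite_range _))]

end Aux

lemma hmat1 {k : Type*} [Fintype k] (P Q : Matrix k k ℂ) {μ : ℝ} (hμlt : μ < 1) :
    ((((1 - μ)⁻¹ : ℝ) : ℂ)) • (((μ : ℂ)) • (P + Q) - Q) =
      (((μ / (1 - μ) : ℝ) : ℂ)) • P - Q := by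
  have hne : (1 : ℝ) - μ ≠ 0 := by linarith
  have e1 : (((1 - μ)⁻¹ : ℝ) : ℂ) * (μ : ℂ) = ((μ / (1 - μ) : ℝ) : ℂ) := by
    push_cast; ring
  have e2 : ((μ / (1 - μ) : ℝ) : ℂ) - (((1 - μ)⁻¹ : ℝ) : ℂ) = -1 := by
    have h3 : μ / (1 - μ) - (1 - μ)⁻¹ = -1 := by field_simp; ring
    exact_mod_cast congrArg (fun x : ℝ => (x : ℂ)) h3
  rw [smul_sub, smul_smul, e1, smul_add, add_sub_assoc, ← sub_smul, e2, neg_one_smul,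
    ← sub_eq_add_neg]

lemma hmat2 {k : Type*} [Fintype k] (P Q : Matrix k k ℂ) {a : ℝ} (ha : 0 ≤ a) :
    ((((1 + a)⁻¹ : ℝ) : ℂ)) • (((a : ℂ)) • P - Q) =
      (((a / (1 + a) : ℝ) : ℂ)) • (P + Q) - Q := by
  have hne : (1 : ℝ) + a ≠ 0 := by linarith
  have e1 : (((1 + a)⁻¹ : ℝ) : ℂ) * (a : ℂ) = ((a / (1 + a) : ℝ) : ℂ) := by
    push_cast; ring
  have e2 : ((a / (1 + a) : ℝ) : ℂ) - 1 = -(((1 + a)⁻¹ : ℝ) : ℂ) := by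
    have h3 : a / (1 + a) - 1 = -(1 + a)⁻¹ := by field_simp; ring
    exact_mod_cast congrArg (fun x : ℝ => (x : ℂ)) h3
  have key : (((a / (1 + a) : ℝ) : ℂ)) • (P + Q) - Q =
      (((a / (1 + a) : ℝ) : ℂ)) • P - (((1 + a)⁻¹ : ℝ) : ℂ) • Q := by
    rw [smul_add, add_sub_assoc,
      sub_eq_add_neg ((((a / (1 + a) : ℝ) : ℂ)) • P) ((((1 + a)⁻¹ : ℝ) : ℂ) • Q)]
    congr 1
    nth_rewrite 2 [← one_smul ℂ Q]
    rw [← sub_smul, e2, neg_smul]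
  rw [smul_sub, smul_smul, e1, key]

lemma arith_final {a b : ℝ} (ha0 : 0 ≤ a) (hb1 : b < 1) (h1 : a ≤ b / (1 - b))
    (h2 : b ≤ a / (1 + a)) : a = b / (1 - b) := by
  have h1b : (0 : ℝ) < 1 - b := by linarith
  have h1a : (0 : ℝ) < 1 + a := by linarith
  have h2' : b * (1 + a) ≤ a := (le_div_iff₀ h1a).mp h2
  refine le_antisymm h1 ?_
  rw [div_le_iff₀ h1b]
  nlinarith


set_option maxHeartbeats 1000000 in
/-- λ_max(P^{-1/2}QP^{-1/2}) = μ/(1-μ) with μ = λ_max(X^{-1/2}QX^{-1/2}), X = P+Q. -/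
theorem stmt13 {n : ℕ} (hn : 0 < n) {P Q : Matrix (Fin n) (Fin n) ℂ}
    (hP : P.PosDef) (hQ : Q.PosSemidef) :
    lambdaMax (conj_isHermitian hP hQ.1) =
      lambdaMax (conj_isHermitian (hP.add_posSemidef hQ) hQ.1) /
        (1 - lambdaMax (conj_isHermitian (hP.add_posSemidef hQ) hQ.1)) := by
  haveI : Nonempty (Fin n) := Fin.pos_iff_nonempty.mp hn
  have hX : (P + Q).PosDef := hP.add_posSemidef hQ
  have hbdd : ∀ (f : Fin n → ℝ), BddAbove (Set.range f) :=
    fun f => Set.Finite.bddAbove (Set.finite_range f)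
  -- a ≥ 0
  have hApsd : (invSqrt hP * Q * invSqrt hP).PosSemidef := by
    have h := hQ.mul_mul_conjTranspose_same (invSqrt hP)
    rwa [(invSqrt_isHermitian hP).eq] at h
  have ha0 : (0 : ℝ) ≤ lambdaMax (conj_isHermitian hP hQ.1) := by
    obtain ⟨i⟩ := (inferInstance : Nonempty (Fin n))
    exact le_trans (hApsd.eigenvalues_nonneg i) (le_ciSup (hbdd _) i)
  have hBpsd : (invSqrt hX * Q * invSqrt hX).PosSemidef := by
    have h := hQ.mul_mul_conjTranspose_same (invSqrt hX)
    rwa [(invSqrt_isHermitian hX).eq] at h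
  have hμ0 : (0 : ℝ) ≤ lambdaMax (conj_isHermitian hX hQ.1) := by
    obtain ⟨i⟩ := (inferInstance : Nonempty (Fin n))
    exact le_trans (hBpsd.eigenvalues_nonneg i) (le_ciSup (hbdd _) i)
  have hμ1 : lambdaMax (conj_isHermitian hX hQ.1) < 1 := by
    obtain ⟨j, hj⟩ := Finite.exists_max (fun i => (conj_isHermitian hX hQ.1).eigenvalues i)
    have hμeq : lambdaMax (conj_isHermitian hX hQ.1) =
        (conj_isHermitian hX hQ.1).eigenvalues j :=
      le_antisymm (ciSup_le hj) (le_ciSup (hbdd _) j)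
    have hTPT : (invSqrt hX * P * invSqrt hX).PosDef := by
      refine conj_posDef' hP (invSqrt_isHermitian hX) ?_
      rw [invSqrt, Matrix.isUnit_nonsing_inv_iff]
      exact (Matrix.isUnit_iff_isUnit_det _).mpr (aux_sqrt_isUnit_det hX)
    have hsub : (((1 : ℝ) : ℂ)) • (1 : Matrix (Fin n) (Fin n) ℂ) -
        invSqrt hX * Q * invSqrt hX = invSqrt hX * P * invSqrt hX := by
      have h1 : invSqrt hX * (P + Q) * invSqrt hX - invSqrt hX * Q * invSqrt hX =
          invSqrt hX * P * invSqrt hX := by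
        rw [Matrix.mul_add, Matrix.add_mul, add_sub_cancel_right]
      rw [← h1, aux_invSqrt_mul_self_mul hX]
      norm_num
    have hne := (conj_isHermitian hX hQ.1).eigenvectorBasis.orthonormal.ne_zero j
    have hpos := hTPT.re_dotProduct_pos (x := ⇑((conj_isHermitian hX hQ.1).eigenvectorBasis j))
      (by simpa using hne)
    rw [← hsub, re_quad (conj_isHermitian hX hQ.1) 1 j] at hpos
    rw [hμeq]
    linarith
  have h1μ : (0 : ℝ) < 1 - lambdaMax (conj_isHermitian hX hQ.1) := by linarith
  -- a ≤ μ / (1 - μ)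
  have hle1 : lambdaMax (conj_isHermitian hP hQ.1) ≤
      lambdaMax (conj_isHermitian hX hQ.1) / (1 - lambdaMax (conj_isHermitian hX hQ.1)) := by
    have hμX : (((lambdaMax (conj_isHermitian hX hQ.1) : ℂ)) • (P + Q) - Q).PosSemidef :=
      (lambdaMax_le_iff hX hQ.1 _).mp le_rfl
    have h2 := smul_posSemidef' hμX (r := (1 - lambdaMax (conj_isHermitian hX hQ.1))⁻¹)
      (le_of_lt (inv_pos.mpr h1μ))
    rw [hmat1 P Q hμ1] at h2
    exact (lambdaMax_le_iff hP hQ.1 _).mpr h2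
  -- μ ≤ a / (1 + a)
  have hle2 : lambdaMax (conj_isHermitian hX hQ.1) ≤
      lambdaMax (conj_isHermitian hP hQ.1) / (1 + lambdaMax (conj_isHermitian hP hQ.1)) := by
    have haP : (((lambdaMax (conj_isHermitian hP hQ.1) : ℂ)) • P - Q).PosSemidef :=
      (lambdaMax_le_iff hP hQ.1 _).mp le_rfl
    have h2 := smul_posSemidef' haP (r := (1 + lambdaMax (conj_isHermitian hP hQ.1))⁻¹)
      (le_of_lt (inv_pos.mpr (add_pos_of_pos_of_nonneg one_pos ha0)))
    rw [hmat2 P Q ha0] at h2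
    exact (lambdaMax_le_iff hX hQ.1 _).mpr h2
  exact arith_final ha0 hμ1 hle1 hle2
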